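/- Let S be a unilateral weighted shift with positive bounded weights, and set r₃(S) = limsup β_n^{1/n}, R_ω(x) = liminf |β_n/a_n|^{1/n} for x = Σ a_n e_n ≠ 0. If r₃(S) < R_ω(x), then σ_S(x) = {λ ∈ ℂ : |λ| ≤ r₃(S)}. If r₃(S) ≥ R_ω(x), then {λ ∈ ℂ : |λ| ≤ R_ω(x)} ⊆ σ_S(x). -/

import Mathlib

open Filter
open scoped ENNReal

section Defs

variable {X : Type*} [NormedAddCommGroup X] [NormedSpace ℂ X]

/-- The local resolvent set of `T` at `x`. -/
def localResolventSet (T : X →L[ℂ] X) (x : X) : Set ℂ :=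
  {μ | ∃ U : Set ℂ, IsOpen U ∧ μ ∈ U ∧ ∃ f : ℂ → X, AnalyticOnNhd ℂ f U ∧
    ∀ z ∈ U, (T - z • (1 : X →L[ℂ] X)) (f z) = x}

/-- The local spectrum of `T` at `x`. -/
def localSpectrum (T : X →L[ℂ] X) (x : X) : Set ℂ :=
  (localResolventSet T x)ᶜ

end Defs

open Topology
set_option maxHeartbeats 1000000
set_option linter.unusedSectionVars false

noncomputable section LSWSAux

/-- `β n` as a complex number. -/
def lswsB (ω : ℕ → ℝ) (n : ℕ) : ℂ := ((∏ i ∈ Finset.range n, ω i : ℝ) : ℂ)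

lemma lswsB_zero (ω : ℕ → ℝ) : lswsB ω 0 = 1 := by simp [lswsB]

lemma lswsB_succ (ω : ℕ → ℝ) (n : ℕ) : lswsB ω (n + 1) = lswsB ω n * (ω n : ℂ) := by
  simp [lswsB, Finset.prod_range_succ]

lemma lswsB_ne_zero (ω : ℕ → ℝ) (hpos : ∀ n, 0 < ω n) (n : ℕ) : lswsB ω n ≠ 0 := by
  simp only [lswsB, ne_eq, Complex.ofReal_eq_zero]
  exact (Finset.prod_pos fun i _ => hpos i).ne'

variable {H : Type*} [NormedAddCommGroup H] [InnerProductSpace ℂ H] [CompleteSpace H]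
lemma lsws_hasSum_S (S : H →L[ℂ] H) (e : HilbertBasis ℕ ℂ H) (ω : ℕ → ℝ)
    (hS : ∀ n, S (e n) = (ω n : ℂ) • e (n + 1)) (y : H) :
    HasSum (fun k => (e.repr y k * ω k) • e (k + 1)) (S y) := by
  have h := (e.hasSum_repr y).mapL S
  refine h.congr_fun fun k => ?_
  rw [map_smul, hS, smul_smul]

lemma lsws_repr_S_zero (S : H →L[ℂ] H) (e : HilbertBasis ℕ ℂ H) (ω : ℕ → ℝ)
    (hS : ∀ n, S (e n) = (ω n : ℂ) • e (n + 1)) (y : H) :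
    e.repr (S y) 0 = 0 := by
  classical
  have h := (lsws_hasSum_S S e ω hS y).mapL (innerSL ℂ (e 0))
  have h2 : HasSum (fun _ : ℕ => (0 : ℂ)) (inner ℂ (e 0) (S y) : ℂ) := by
    refine h.congr_fun fun k => ?_
    rw [innerSL_apply_apply, inner_smul_right, orthonormal_iff_ite.mp e.orthonormal]
    simp
  rw [e.repr_apply_apply]
  exact h2.unique hasSum_zero

lemma lsws_repr_S_succ (S : H →L[ℂ] H) (e : HilbertBasis ℕ ℂ H) (ω : ℕ → ℝ)
    (hS : ∀ n, S (e n) = (ω n : ℂ) • e (n + 1)) (y : H) (n : ℕ) :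
    e.repr (S y) (n + 1) = e.repr y n * ω n := by
  classical
  have h := (lsws_hasSum_S S e ω hS y).mapL (innerSL ℂ (e (n + 1)))
  have h2 : HasSum (fun k : ℕ => if k = n then e.repr y n * ω n else 0)
      (inner ℂ (e (n + 1)) (S y) : ℂ) := by
    refine h.congr_fun fun k => ?_
    rw [innerSL_apply_apply, inner_smul_right, orthonormal_iff_ite.mp e.orthonormal]
    by_cases hk : k = n
    · subst hk; simp
    · have : ¬ (n + 1 = k + 1) := by omega
      simp [hk, this, Ne.symm hk]
  rw [e.repr_apply_apply]
  exact ((hasSum_ite_eq n _).unique h2).symm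

lemma lsws_repr_sub_smul (S : H →L[ℂ] H) (e : HilbertBasis ℕ ℂ H) (z : ℂ) (y : H) (n : ℕ) :
    e.repr ((S - z • (1 : H →L[ℂ] H)) y) n = e.repr (S y) n - z * e.repr y n := by
  simp [ContinuousLinearMap.sub_apply]
  rfl

/-- The key identity satisfied by the coordinates of any local resolvent function. -/
lemma lsws_key_identity (S : H →L[ℂ] H) (e : HilbertBasis ℕ ℂ H) (ω : ℕ → ℝ)
    (hpos : ∀ n, 0 < ω n) (hS : ∀ n, S (e n) = (ω n : ℂ) • e (n + 1)) (x : H)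
    (z : ℂ) (y : H) (hy : (S - z • (1 : H →L[ℂ] H)) y = x) (N : ℕ) :
    z ^ (N + 1) * e.repr y N =
      -(lswsB ω N) * ∑ j ∈ Finset.range (N + 1),
        (e.repr x j / lswsB ω j) * z ^ j := by
  induction N with
  | zero =>
      have h0 : e.repr x 0 = e.repr (S y) 0 - z * e.repr y 0 := by
        rw [← hy, lsws_repr_sub_smul]
      rw [lsws_repr_S_zero S e ω hS] at h0
      simp only [lswsB_zero, zero_add, Finset.sum_range_one, pow_zero, pow_one, mul_one, div_one,
        neg_mul, one_mul]
      linear_combination h0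
  | succ N ih =>
      have h1 : e.repr x (N + 1) = e.repr y N * ω N - z * e.repr y (N + 1) := by
        rw [← hy, lsws_repr_sub_smul, lsws_repr_S_succ S e ω hS]
      have hB := lswsB_ne_zero ω hpos N
      have hw : (ω N : ℂ) ≠ 0 := by
        exact_mod_cast (hpos N).ne'
      have hinv1 : lswsB ω N * (lswsB ω N)⁻¹ = 1 := mul_inv_cancel₀ hB
      have hinv2 : (ω N : ℂ) * ((ω N : ℂ))⁻¹ = 1 := mul_inv_cancel₀ hw
      rw [Finset.sum_range_succ, lswsB_succ]
      linear_combination z^(N+1) * h1 + (ω N : ℂ) * ih +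
        (e.repr x (N+1) * z^(N+1) * ((ω N:ℂ) * ((ω N:ℂ))⁻¹)) * hinv1 +
        (e.repr x (N+1) * z^(N+1)) * hinv2


lemma lswsB_norm (ω : ℕ → ℝ) (hpos : ∀ n, 0 < ω n) (n : ℕ) :
    ‖lswsB ω n‖ = ∏ i ∈ Finset.range n, ω i := by
  rw [lswsB, Complex.norm_real, Real.norm_eq_abs,
    abs_of_pos (Finset.prod_pos fun i _ => hpos i)]

lemma lsws_bddAbove (ω : ℕ → ℝ) (hpos : ∀ n, 0 < ω n) (M : ℝ) (hbd : ∀ n, ω n ≤ M) :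
    IsBoundedUnder (· ≤ ·) atTop
      (fun n : ℕ => (∏ i ∈ Finset.range n, ω i) ^ ((n : ℝ)⁻¹)) := by
  refine isBoundedUnder_of ⟨max M 1, fun n => ?_⟩
  have h1 : (∏ i ∈ Finset.range n, ω i) ≤ (max M 1) ^ n := by
    calc (∏ i ∈ Finset.range n, ω i) ≤ ∏ _i ∈ Finset.range n, max M 1 :=
          Finset.prod_le_prod (fun i _ => (hpos i).le)
            (fun i _ => (hbd i).trans (le_max_left _ _))
      _ = (max M 1) ^ n := by simp
  rcases Nat.eq_zero_or_pos n with hn | hn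
  · simp [hn]
  · calc (∏ i ∈ Finset.range n, ω i) ^ ((n : ℝ)⁻¹)
        ≤ ((max M 1) ^ n) ^ ((n : ℝ)⁻¹) :=
          Real.rpow_le_rpow (Finset.prod_nonneg fun i _ => (hpos i).le) h1 (by positivity)
      _ = max M 1 := by
          rw [← Real.rpow_natCast (max M 1) n, ← Real.rpow_mul (by positivity),
            mul_inv_cancel₀ (by exact_mod_cast hn.ne'), Real.rpow_one]

lemma lsws_bddBelow (ω : ℕ → ℝ) (hpos : ∀ n, 0 < ω n) :
    IsBoundedUnder (· ≥ ·) atTop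
      (fun n : ℕ => (∏ i ∈ Finset.range n, ω i) ^ ((n : ℝ)⁻¹)) := by
  refine isBoundedUnder_of ⟨0, fun n => ?_⟩
  have : (0:ℝ) ≤ ∏ i ∈ Finset.range n, ω i := Finset.prod_nonneg fun i _ => (hpos i).le
  positivity

lemma lsws_r3_nonneg (ω : ℕ → ℝ) (hpos : ∀ n, 0 < ω n) (M : ℝ) (hbd : ∀ n, ω n ≤ M) :
    0 ≤ atTop.limsup fun n : ℕ => (∏ i ∈ Finset.range n, ω i) ^ ((n : ℝ)⁻¹) := by
  refine le_limsup_of_frequently_le (Eventually.of_forall fun n => ?_).frequently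
    (lsws_bddAbove ω hpos M hbd)
  have : (0:ℝ) ≤ ∏ i ∈ Finset.range n, ω i := Finset.prod_nonneg fun i _ => (hpos i).le
  positivity

lemma lsws_beta_upper (ω : ℕ → ℝ) (hpos : ∀ n, 0 < ω n) (M : ℝ) (hbd : ∀ n, ω n ≤ M)
    (s : ℝ) (hs : atTop.limsup (fun n : ℕ => (∏ i ∈ Finset.range n, ω i) ^ ((n : ℝ)⁻¹)) < s) :
    ∀ᶠ n in atTop, (∏ i ∈ Finset.range n, ω i) ≤ s ^ n := by
  filter_upwards [eventually_lt_of_limsup_lt hs (lsws_bddAbove ω hpos M hbd),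
    eventually_ge_atTop 1] with n hn hn1
  have hβ : (0:ℝ) ≤ ∏ i ∈ Finset.range n, ω i := Finset.prod_nonneg fun i _ => (hpos i).le
  calc (∏ i ∈ Finset.range n, ω i)
      = (((∏ i ∈ Finset.range n, ω i) ^ ((n:ℝ)⁻¹)) ^ n) :=
        (Real.rpow_inv_natCast_pow hβ (by omega)).symm
    _ ≤ s ^ n := pow_le_pow_left₀ (Real.rpow_nonneg hβ _) hn.le n

lemma lsws_beta_lower (ω : ℕ → ℝ) (hpos : ∀ n, 0 < ω n) (s : ℝ) (hs0 : 0 ≤ s)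
    (hs : s < atTop.limsup (fun n : ℕ => (∏ i ∈ Finset.range n, ω i) ^ ((n : ℝ)⁻¹))) :
    ∃ᶠ n in atTop, s ^ n < ∏ i ∈ Finset.range n, ω i := by
  have hco : IsCoboundedUnder (· ≤ ·) atTop
      (fun n : ℕ => (∏ i ∈ Finset.range n, ω i) ^ ((n : ℝ)⁻¹)) :=
    (lsws_bddBelow ω hpos).isCoboundedUnder_le
  have hfreq := frequently_lt_of_lt_limsup hco hs
  rw [frequently_atTop] at hfreq ⊢
  intro N
  obtain ⟨n, hnN, hn⟩ := hfreq (max N 1)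
  refine ⟨n, le_trans (le_max_left _ _) hnN, ?_⟩
  have hn1 : 1 ≤ n := le_trans (le_max_right _ _) hnN
  have hβ : (0:ℝ) ≤ ∏ i ∈ Finset.range n, ω i := Finset.prod_nonneg fun i _ => (hpos i).le
  calc s ^ n
      < ((∏ i ∈ Finset.range n, ω i) ^ ((n:ℝ)⁻¹)) ^ n := pow_lt_pow_left₀ hn hs0 (by omega)
    _ = ∏ i ∈ Finset.range n, ω i := Real.rpow_inv_natCast_pow hβ (by omega)


lemma lsws_coeff_bound (e : HilbertBasis ℕ ℂ H) (ω : ℕ → ℝ) (hpos : ∀ n, 0 < ω n) (x : H)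
    (r' : ℝ) (hr'pos : 0 < r')
    (hr' : ENNReal.ofReal r' < atTop.liminf fun n : ℕ =>
      (ENNReal.ofReal (∏ i ∈ Finset.range n, ω i) / ENNReal.ofReal ‖e.repr x n‖) ^ ((n : ℝ)⁻¹)) :
    ∀ᶠ n in atTop, ‖e.repr x n / lswsB ω n‖ * r' ^ n ≤ 1 := by
  filter_upwards [eventually_lt_of_lt_liminf hr', eventually_ge_atTop 1] with n hn hn1
  set β : ℝ := ∏ i ∈ Finset.range n, ω i with hβ
  have hβpos : 0 < β := Finset.prod_pos fun i _ => hpos i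
  by_cases ha : e.repr x n = 0
  · simp [ha]
  have hanorm : (0:ℝ) < ‖e.repr x n‖ := norm_pos_iff.mpr ha
  have h2 : (ENNReal.ofReal r') ^ (n : ℕ) < ENNReal.ofReal β / ENNReal.ofReal ‖e.repr x n‖ := by
    calc (ENNReal.ofReal r') ^ (n:ℕ)
        = (ENNReal.ofReal r') ^ ((n:ℝ)) := (ENNReal.rpow_natCast _ n).symm
      _ < ((ENNReal.ofReal β / ENNReal.ofReal ‖e.repr x n‖) ^ ((n:ℝ)⁻¹)) ^ ((n:ℝ)) := by
          apply ENNReal.rpow_lt_rpow hn (by positivity)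
      _ = (ENNReal.ofReal β / ENNReal.ofReal ‖e.repr x n‖) ^ (((n:ℝ)⁻¹) * (n:ℝ)) := by
          rw [← ENNReal.rpow_mul]
      _ = _ := by
          rw [inv_mul_cancel₀ (by exact_mod_cast Nat.one_le_iff_ne_zero.mp hn1), ENNReal.rpow_one]
  have h3 : ENNReal.ofReal ‖e.repr x n‖ * (ENNReal.ofReal r') ^ (n:ℕ) < ENNReal.ofReal β := by
    rw [mul_comm]
    rw [ENNReal.lt_div_iff_mul_lt
      (Or.inl (ne_of_gt (ENNReal.ofReal_pos.mpr hanorm)))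
      (Or.inl ENNReal.ofReal_ne_top)] at h2
    exact h2
  have h4 : ‖e.repr x n‖ * r' ^ n < β := by
    rw [← ENNReal.ofReal_pow hr'pos.le, ← ENNReal.ofReal_mul hanorm.le] at h3
    exact (ENNReal.ofReal_lt_ofReal_iff hβpos).mp h3
  have hnormB : ‖lswsB ω n‖ = β := by
    rw [lswsB, Complex.norm_real, Real.norm_eq_abs, abs_of_pos hβpos]
  rw [norm_div, hnormB, div_mul_eq_mul_div, div_le_one hβpos]
  exact h4.le

lemma lsws_eq_zero_of_repr (e : HilbertBasis ℕ ℂ H) (x : H)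
    (h : ∀ n, e.repr x n = 0) : x = 0 := by
  have : e.repr x = 0 := lp.ext (funext h)
  simpa using congrArg e.repr.symm this

lemma lsws_lim_a (e : HilbertBasis ℕ ℂ H) (U : Set ℂ) (hUo : IsOpen U) (h0U : (0:ℂ) ∈ U)
    (f : ℂ → H) (hfc : ContinuousOn f U) (N : ℕ) (aN : ℂ)
    (hid : ∀ z ∈ U, z ≠ 0 → aN = -z * e.repr (f z) N) : aN = 0 := by
  set w : ℕ → ℂ := fun k => ((1 / (k + 1 : ℝ) : ℝ) : ℂ) with hw
  have hwlim : Tendsto w atTop (𝓝 0) := by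
    rw [hw]
    have := tendsto_one_div_add_atTop_nhds_zero_nat (𝕜 := ℝ)
    have := (Complex.continuous_ofReal.tendsto 0).comp this
    exact this.congr fun k => by simp
  have hwne : ∀ k, w k ≠ 0 := by
    intro k
    simp only [hw, ne_eq, Complex.ofReal_eq_zero]
    positivity
  have hwU : ∀ᶠ k in atTop, w k ∈ U := hwlim.eventually (hUo.eventually_mem h0U)
  -- the function z ↦ -z * e.repr (f z) N tends to 0 at 0
  have hcontf : ContinuousAt f 0 := hfc.continuousAt (hUo.mem_nhds h0U)
  have hcont : Tendsto (fun z => -z * (e.repr (f z) N)) (𝓝 0) (𝓝 0) := by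
    have h1 : ContinuousAt (fun z => (e.repr (f z) N)) 0 := by
      have : (fun z => e.repr (f z) N) = fun z => (inner ℂ (e N) (f z) : ℂ) := by
        funext z; rw [e.repr_apply_apply]
      rw [this]
      exact ((innerSL ℂ (e N)).continuous.tendsto _).comp hcontf
    have h2 : ContinuousAt (fun z : ℂ => -z * e.repr (f z) N) 0 :=
      (continuous_neg.continuousAt (x := (0:ℂ))).mul h1
    unfold ContinuousAt at h2
    simpa using h2
  have : Tendsto (fun k => -(w k) * (e.repr (f (w k)) N)) atTop (𝓝 0) := hcont.comp hwlim
  have hconst : Tendsto (fun _ : ℕ => aN) atTop (𝓝 0) := by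
    refine this.congr' ?_
    filter_upwards [hwU] with k hk
    exact (hid (w k) hk (hwne k)).symm
  exact tendsto_nhds_unique tendsto_const_nhds hconst

lemma lsws_zero_resolvent (S : H →L[ℂ] H) (e : HilbertBasis ℕ ℂ H) (ω : ℕ → ℝ)
    (hpos : ∀ n, 0 < ω n) (hS : ∀ n, S (e n) = (ω n : ℂ) • e (n + 1)) (x : H)
    (h : (0:ℂ) ∈ localResolventSet S x) : x = 0 := by
  obtain ⟨U, hUo, h0U, f, hfa, hfx⟩ := h
  refine lsws_eq_zero_of_repr e x ?_
  intro N
  induction N using Nat.strong_induction_on with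
  | _ N ih =>
    refine lsws_lim_a e U hUo h0U f hfa.continuousOn N _ ?_
    intro z hz hzne
    have E := lsws_key_identity S e ω hpos hS x z (f z) (hfx z hz) N
    have hsum : ∑ j ∈ Finset.range (N + 1), (e.repr x j / lswsB ω j) * z ^ j
        = (e.repr x N / lswsB ω N) * z ^ N := by
      refine Finset.sum_eq_single N (fun j hj hjne => ?_) (fun hN => absurd (Finset.self_mem_range_succ N) hN)
      have : j < N := by
        have := Finset.mem_range.mp hj; omega
      rw [ih j this]
      simp
    rw [hsum] at E
    have hB := lswsB_ne_zero ω hpos N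
    have hcan : lswsB ω N * (e.repr x N / lswsB ω N) = e.repr x N := by
      field_simp
    have hzN : z ^ N ≠ 0 := pow_ne_zero _ hzne
    have h5 : (e.repr x N + z * e.repr (f z) N) * z ^ N = 0 := by
      linear_combination E - z ^ N * hcan
    have h6 := (mul_eq_zero.mp h5).resolve_right hzN
    linear_combination h6

lemma lsws_mem_spectrum (S : H →L[ℂ] H) (e : HilbertBasis ℕ ℂ H) (ω : ℕ → ℝ)
    (hpos : ∀ n, 0 < ω n) (hS : ∀ n, S (e n) = (ω n : ℂ) • e (n + 1))
    (x : H) (hx : x ≠ 0) (μ : ℂ) (hμne : μ ≠ 0)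
    (hμ3 : ‖μ‖ ≤ atTop.limsup fun n : ℕ => (∏ i ∈ Finset.range n, ω i) ^ ((n : ℝ)⁻¹))
    (hμR : ENNReal.ofReal ‖μ‖ ≤ atTop.liminf fun n : ℕ =>
      (ENNReal.ofReal (∏ i ∈ Finset.range n, ω i) / ENNReal.ofReal ‖e.repr x n‖) ^ ((n : ℝ)⁻¹)) :
    μ ∉ localResolventSet S x := by
  intro hres
  obtain ⟨U, hUo, hμU, f, hfa, hfx⟩ := hres
  set c : ℕ → ℂ := fun n => e.repr x n / lswsB ω n with hc
  have hμpos : 0 < ‖μ‖ := norm_pos_iff.mpr hμne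
  -- summability of the coefficient series below radius ‖μ‖
  have hcsum : ∀ ρ : ℝ, 0 ≤ ρ → ρ < ‖μ‖ → Summable (fun j => ‖c j‖ * ρ ^ j) := by
    intro ρ hρ0 hρ
    obtain ⟨r', hρr', hr'μ⟩ : ∃ r', ρ < r' ∧ r' < ‖μ‖ := ⟨(ρ + ‖μ‖) / 2, by constructor <;> linarith⟩
    have hr'pos : 0 < r' := lt_of_le_of_lt hρ0 hρr'
    have hr'R : ENNReal.ofReal r' < atTop.liminf fun n : ℕ =>
        (ENNReal.ofReal (∏ i ∈ Finset.range n, ω i) / ENNReal.ofReal ‖e.repr x n‖) ^ ((n : ℝ)⁻¹) :=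
      lt_of_lt_of_le ((ENNReal.ofReal_lt_ofReal_iff hμpos).mpr hr'μ) hμR
    have hev := lsws_coeff_bound e ω hpos x r' hr'pos hr'R
    have hgeom : Summable (fun j : ℕ => (ρ / r') ^ j) :=
      summable_geometric_of_lt_one (by positivity) (by rw [div_lt_one hr'pos]; exact hρr')
    refine hgeom.of_norm_bounded_eventually ?_
    rw [Nat.cofinite_eq_atTop]
    filter_upwards [hev] with n hn
    have hr'n : r' ^ n ≠ 0 := (pow_pos hr'pos n).ne'
    rw [Real.norm_eq_abs, abs_of_nonneg (by positivity)]
    calc ‖c n‖ * ρ ^ n = (‖c n‖ * r' ^ n) * (ρ ^ n / r' ^ n) := by field_simp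
      _ ≤ 1 * (ρ ^ n / r' ^ n) := mul_le_mul_of_nonneg_right hn (by positivity)
      _ = (ρ / r') ^ n := by rw [one_mul, div_pow]
  have hcz : ∀ z : ℂ, ‖z‖ < ‖μ‖ → Summable (fun j => c j * z ^ j) := by
    intro z hz
    refine ((hcsum ‖z‖ (norm_nonneg z) hz).of_norm_bounded_eventually ?_).of_norm
    refine Eventually.of_forall fun j => ?_
    rw [norm_mul, norm_pow, Real.norm_eq_abs, abs_of_nonneg (by positivity)]
  set F : ℂ → ℂ := fun z => ∑' j, c j * z ^ j with hF
  -- F is analytic on the ball of radius ‖μ‖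
  have hFan : AnalyticOnNhd ℂ F (Metric.ball (0:ℂ) ‖μ‖) := by
    refine DifferentiableOn.analyticOnNhd ?_ Metric.isOpen_ball
    intro z hz
    rw [Metric.mem_ball, dist_zero_right] at hz
    obtain ⟨ρ, h1, h2⟩ : ∃ ρ, ‖z‖ < ρ ∧ ρ < ‖μ‖ :=
      ⟨(‖z‖ + ‖μ‖) / 2, by constructor <;> linarith⟩
    have h3 : 0 < ρ := lt_of_le_of_lt (norm_nonneg z) h1
    have hdiff : DifferentiableOn ℂ F (Metric.ball (0:ℂ) ρ) := by
      refine Complex.differentiableOn_tsum_of_summable_norm (hcsum ρ h3.le h2)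
        (fun j => ((differentiable_const (c j)).mul (differentiable_pow j)).differentiableOn)
        Metric.isOpen_ball (fun j w hw => ?_)
      rw [Metric.mem_ball, dist_zero_right] at hw
      rw [norm_mul, norm_pow]
      exact mul_le_mul_of_nonneg_left (pow_le_pow_left₀ (norm_nonneg w) hw.le j) (norm_nonneg _)
    have hzρ : z ∈ Metric.ball (0:ℂ) ρ := by rwa [Metric.mem_ball, dist_zero_right]
    exact (hdiff.differentiableAt (Metric.isOpen_ball.mem_nhds hzρ)).differentiableWithinAt
  -- least nonzero coefficient
  have hPex : ∃ n, e.repr x n ≠ 0 := by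
    by_contra h'
    push_neg at h'
    exact hx (lsws_eq_zero_of_repr e x h')
  classical
  set n₀ : ℕ := Nat.find hPex with hn₀def
  have hn₀ : e.repr x n₀ ≠ 0 := Nat.find_spec hPex
  have hmin : ∀ k < n₀, e.repr x k = 0 := fun k hk => by
    have := Nat.find_min hPex hk
    simpa using this
  have hcn₀ : c n₀ ≠ 0 := div_ne_zero hn₀ (lswsB_ne_zero ω hpos n₀)
  have hcn₀pos : 0 < ‖c n₀‖ := norm_pos_iff.mpr hcn₀
  -- a point close to 0 where F doesn't vanish
  obtain ⟨z₁, hz₁B, hz₁F⟩ : ∃ z₁ : ℂ, z₁ ∈ Metric.ball (0:ℂ) ‖μ‖ ∧ F z₁ ≠ 0 := by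
    obtain ⟨ρ₀, hρ₀pos, hρ₀μ⟩ : ∃ ρ₀, 0 < ρ₀ ∧ ρ₀ < ‖μ‖ :=
      ⟨‖μ‖ / 2, by constructor <;> linarith⟩
    have hsum₀ := hcsum ρ₀ hρ₀pos.le hρ₀μ
    have htail : Summable (fun k => ‖c (k + (n₀ + 1))‖ * ρ₀ ^ k) := by
      have h1 : Summable (fun k => ‖c (k + (n₀ + 1))‖ * ρ₀ ^ (k + (n₀ + 1))) :=
        (summable_nat_add_iff (f := fun j => ‖c j‖ * ρ₀ ^ j) (n₀ + 1)).mpr hsum₀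
      have := h1.mul_right ((ρ₀ ^ (n₀ + 1))⁻¹)
      refine this.congr fun k => ?_
      have : ρ₀ ^ (n₀ + 1) ≠ 0 := (pow_pos hρ₀pos _).ne'
      rw [pow_add]
      field_simp
    set K : ℝ := ∑' k, ‖c (k + (n₀ + 1))‖ * ρ₀ ^ k with hK
    have hK0 : 0 ≤ K := tsum_nonneg fun k => by positivity
    obtain ⟨η, hηpos, hηρ₀, hηK⟩ : ∃ η, 0 < η ∧ η ≤ ρ₀ ∧ K * η < ‖c n₀‖ := by
      refine ⟨min ρ₀ (‖c n₀‖ / (2 * (K + 1))), lt_min hρ₀pos (by positivity),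
        min_le_left _ _, ?_⟩
      have h1 : min ρ₀ (‖c n₀‖ / (2 * (K + 1))) ≤ ‖c n₀‖ / (2 * (K + 1)) := min_le_right _ _
      have h2 : K * min ρ₀ (‖c n₀‖ / (2 * (K + 1))) ≤ K * (‖c n₀‖ / (2 * (K + 1))) :=
        mul_le_mul_of_nonneg_left h1 hK0
      have h3 : K * (‖c n₀‖ / (2 * (K + 1))) < ‖c n₀‖ := by
        rw [mul_div_assoc', div_lt_iff₀ (by positivity)]
        nlinarith
      linarith
    set z₁ : ℂ := (η : ℂ) with hz₁
    have hz₁norm : ‖z₁‖ = η := by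
      rw [hz₁, Complex.norm_real, Real.norm_eq_abs, abs_of_pos hηpos]
    have hz₁μ : ‖z₁‖ < ‖μ‖ := by rw [hz₁norm]; linarith
    refine ⟨z₁, by rwa [Metric.mem_ball, dist_zero_right], ?_⟩
    have hsz₁ : Summable (fun j => c j * z₁ ^ j) := hcz z₁ hz₁μ
    have hsplit := hsz₁.sum_add_tsum_nat_add (n₀ + 1)
    have hhead : ∑ j ∈ Finset.range (n₀ + 1), c j * z₁ ^ j = c n₀ * z₁ ^ n₀ := by
      refine Finset.sum_eq_single n₀ (fun j hj hjne => ?_)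
        (fun hN => absurd (Finset.self_mem_range_succ n₀) hN)
      have hjn : j < n₀ := by have := Finset.mem_range.mp hj; omega
      have : c j = 0 := by rw [hc]; simp only []; rw [hmin j hjn]; simp
      rw [this, zero_mul]
    -- bound the tail
    have htailsum : Summable fun k => ‖c (k + (n₀ + 1)) * z₁ ^ (k + (n₀ + 1))‖ := by
      refine (htail.mul_right (η ^ (n₀ + 1))).of_nonneg_of_le
        (fun k => norm_nonneg _) fun k => ?_
      rw [norm_mul, norm_pow, hz₁norm, pow_add]
      have h1 : η ^ k ≤ ρ₀ ^ k := pow_le_pow_left₀ hηpos.le hηρ₀ k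
      have h2 : (0:ℝ) ≤ η ^ (n₀ + 1) := by positivity
      have h3 : (0:ℝ) ≤ ‖c (k + (n₀ + 1))‖ := norm_nonneg _
      calc ‖c (k + (n₀ + 1))‖ * (η ^ k * η ^ (n₀ + 1))
          ≤ ‖c (k + (n₀ + 1))‖ * (ρ₀ ^ k * η ^ (n₀ + 1)) := by gcongr
        _ = ‖c (k + (n₀ + 1))‖ * ρ₀ ^ k * η ^ (n₀ + 1) := by ring
    have htb : ‖∑' k, c (k + (n₀ + 1)) * z₁ ^ (k + (n₀ + 1))‖ ≤ K * η ^ (n₀ + 1) := by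
      calc ‖∑' k, c (k + (n₀ + 1)) * z₁ ^ (k + (n₀ + 1))‖
          ≤ ∑' k, ‖c (k + (n₀ + 1)) * z₁ ^ (k + (n₀ + 1))‖ :=
            norm_tsum_le_tsum_norm htailsum
        _ ≤ ∑' k, ‖c (k + (n₀ + 1))‖ * ρ₀ ^ k * η ^ (n₀ + 1) := by
            refine Summable.tsum_le_tsum (fun k => ?_) htailsum (htail.mul_right _)
            rw [norm_mul, norm_pow, hz₁norm, pow_add]
            have h1 : η ^ k ≤ ρ₀ ^ k := pow_le_pow_left₀ hηpos.le hηρ₀ k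
            have h3 : (0:ℝ) ≤ ‖c (k + (n₀ + 1))‖ := norm_nonneg _
            have h2 : (0:ℝ) ≤ η ^ (n₀ + 1) := by positivity
            calc ‖c (k + (n₀ + 1))‖ * (η ^ k * η ^ (n₀ + 1))
                ≤ ‖c (k + (n₀ + 1))‖ * (ρ₀ ^ k * η ^ (n₀ + 1)) := by gcongr
              _ = ‖c (k + (n₀ + 1))‖ * ρ₀ ^ k * η ^ (n₀ + 1) := by ring
        _ = K * η ^ (n₀ + 1) := by rw [← tsum_mul_right]
    -- conclude F z₁ ≠ 0
    have hFval : F z₁ = c n₀ * z₁ ^ n₀ + ∑' k, c (k + (n₀ + 1)) * z₁ ^ (k + (n₀ + 1)) := by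
      rw [hF]
      simp only []
      rw [← hsplit, hhead]
    have hlow : ‖c n₀‖ * η ^ n₀ - K * η ^ (n₀ + 1) ≤ ‖F z₁‖ := by
      have h1 : ‖c n₀ * z₁ ^ n₀‖ = ‖c n₀‖ * η ^ n₀ := by
        rw [norm_mul, norm_pow, hz₁norm]
      have h2 := norm_sub_norm_le (c n₀ * z₁ ^ n₀)
        (-(∑' k, c (k + (n₀ + 1)) * z₁ ^ (k + (n₀ + 1))))
      rw [sub_neg_eq_add, ← hFval, norm_neg, h1] at h2
      linarith
    have hstrict : 0 < ‖c n₀‖ * η ^ n₀ - K * η ^ (n₀ + 1) := by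
      have hηn : 0 < η ^ n₀ := pow_pos hηpos n₀
      have : K * η ^ (n₀ + 1) = (K * η) * η ^ n₀ := by ring
      rw [this]
      nlinarith
    exact norm_pos_iff.mp (by linarith)
  -- a nonempty open subset of U inside the punctured ball
  obtain ⟨ε, hεpos, hball⟩ := Metric.isOpen_iff.mp hUo μ hμU
  set δ : ℝ := min (ε / 2) (‖μ‖ / 2) with hδ
  have hδpos : 0 < δ := lt_min (by linarith) (by linarith)
  have hδε : δ < ε := lt_of_le_of_lt (min_le_left _ _) (by linarith)
  have hδμ : δ ≤ ‖μ‖ / 2 := min_le_right _ _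
  set w₀ : ℂ := ((1 - δ / ‖μ‖ : ℝ) : ℂ) * μ with hw₀
  have hw₀μ : ‖w₀ - μ‖ = δ := by
    have h1 : w₀ - μ = ((-(δ / ‖μ‖) : ℝ) : ℂ) * μ := by rw [hw₀]; push_cast; ring
    rw [h1, norm_mul, Complex.norm_real, Real.norm_eq_abs, abs_neg,
      abs_of_nonneg (by positivity), div_mul_cancel₀ _ hμpos.ne']
  have hfrac : δ / ‖μ‖ ≤ 1 / 2 := by
    rw [div_le_div_iff₀ hμpos (by norm_num)]
    linarith
  have hw₀norm : ‖w₀‖ = (1 - δ / ‖μ‖) * ‖μ‖ := by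
    rw [hw₀, norm_mul, Complex.norm_real, Real.norm_eq_abs,
      abs_of_nonneg (by linarith)]
  have hw₀pos : 0 < ‖w₀‖ := by
    rw [hw₀norm]
    have : 1 - δ / ‖μ‖ ≥ 1 / 2 := by linarith
    nlinarith
  have hw₀lt : ‖w₀‖ < ‖μ‖ := by
    rw [hw₀norm]
    have h2 : 0 < δ / ‖μ‖ := by positivity
    nlinarith
  have hw₀U : w₀ ∈ U := hball (by rw [Metric.mem_ball, dist_eq_norm, hw₀μ]; exact hδε)
  set W : Set ℂ := U ∩ (norm ⁻¹' Set.Ioo 0 ‖μ‖) with hW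
  have hWo : IsOpen W := hUo.inter (isOpen_Ioo.preimage continuous_norm)
  have hw₀W : w₀ ∈ W := ⟨hw₀U, hw₀pos, hw₀lt⟩
  by_cases hEq : ∀ z ∈ W, F z = 0
  · -- identity theorem forces F ≡ 0 on the ball, contradicting F z₁ ≠ 0
    have hFev : F =ᶠ[𝓝 w₀] 0 := by
      filter_upwards [hWo.mem_nhds hw₀W] with z hz
      exact hEq z hz
    have hw₀B : w₀ ∈ Metric.ball (0:ℂ) ‖μ‖ := by
      rwa [Metric.mem_ball, dist_zero_right]
    have hzero := hFan.eqOn_zero_of_preconnected_of_eventuallyEq_zero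
      (convex_ball (0:ℂ) ‖μ‖).isPreconnected hw₀B hFev
    exact hz₁F (hzero hz₁B)
  · push_neg at hEq
    obtain ⟨z, hzW, hFz⟩ := hEq
    have hzU : z ∈ U := hzW.1
    have hz2 : ‖z‖ ∈ Set.Ioo 0 ‖μ‖ := hzW.2
    have hz0 : 0 < ‖z‖ := hz2.1
    have hzμ : ‖z‖ < ‖μ‖ := hz2.2
    have hzne : z ≠ 0 := norm_pos_iff.mp hz0
    have hFzpos : 0 < ‖F z‖ := norm_pos_iff.mpr hFz
    -- the coordinates of f z
    have hgt : Tendsto (fun N => ‖e.repr (f z) N‖ ^ (2:ℝ)) atTop (𝓝 0) := by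
      have hsq : Summable (fun N => ‖e.repr (f z) N‖ ^ (2:ℝ)) := by
        have := (lp.memℓp (e.repr (f z))).summable (by norm_num : 0 < (2:ℝ≥0∞).toReal)
        simpa using this
      exact hsq.tendsto_atTop_zero
    have hg1 : ∀ᶠ N in atTop, ‖e.repr (f z) N‖ < 1 := by
      have := hgt.eventually_lt_const (by norm_num : (0:ℝ) < 1)
      filter_upwards [this] with N hN
      by_contra h'
      push_neg at h'
      have : (1:ℝ) ^ (2:ℝ) ≤ ‖e.repr (f z) N‖ ^ (2:ℝ) :=
        Real.rpow_le_rpow (by norm_num) h' (by norm_num)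
      rw [Real.one_rpow] at this
      linarith
    -- partial sums of the series converge to F z ≠ 0
    have hPtend : Tendsto (fun N => ∑ j ∈ Finset.range (N + 1), c j * z ^ j) atTop (𝓝 (F z)) :=
      ((hcz z hzμ).hasSum.tendsto_sum_nat).comp (tendsto_add_atTop_nat 1)
    have hPev : ∀ᶠ N in atTop, ‖F z‖ / 2 ≤ ‖∑ j ∈ Finset.range (N + 1), c j * z ^ j‖ := by
      have hb := hPtend.eventually (Metric.ball_mem_nhds (F z) (half_pos hFzpos))
      filter_upwards [hb] with N hN
      have h1 := norm_sub_norm_le (F z) (∑ j ∈ Finset.range (N + 1), c j * z ^ j)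
      rw [← dist_eq_norm] at h1
      rw [dist_comm] at hN
      linarith
    -- frequent lower bound on β
    obtain ⟨s, hzs, hsμ⟩ : ∃ s, ‖z‖ < s ∧ s < ‖μ‖ :=
      ⟨(‖z‖ + ‖μ‖) / 2, by constructor <;> linarith⟩
    have hs0 : 0 ≤ s := le_of_lt (lt_of_le_of_lt (norm_nonneg z) hzs)
    have hfreq := lsws_beta_lower ω hpos s hs0 (lt_of_lt_of_le hsμ hμ3)
    have hbig : ∀ᶠ N in atTop, 2 * ‖z‖ / ‖F z‖ < (s / ‖z‖) ^ N := by
      have hq : 1 < s / ‖z‖ := by rw [lt_div_iff₀ hz0]; linarith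
      exact (tendsto_pow_atTop_atTop_of_one_lt hq).eventually_gt_atTop _
    obtain ⟨N, hsN, hPN, hgN, hbigN⟩ :=
      (hfreq.and_eventually (hPev.and (hg1.and hbig))).exists
    -- the key identity in norms
    have E := lsws_key_identity S e ω hpos hS x z (f z) (hfx z hzU) N
    have En : ‖z‖ ^ (N + 1) * ‖e.repr (f z) N‖ =
        (∏ i ∈ Finset.range N, ω i) * ‖∑ j ∈ Finset.range (N + 1), c j * z ^ j‖ := by
      have := congrArg norm E
      rw [norm_mul, norm_pow, norm_mul, norm_neg, lswsB_norm ω hpos] at this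
      exact this
    have hβpos : 0 < ∏ i ∈ Finset.range N, ω i := Finset.prod_pos fun i _ => hpos i
    have hzN1 : 0 < ‖z‖ ^ (N + 1) := pow_pos hz0 _
    -- chain of inequalities
    have h1 : s ^ N * (‖F z‖ / 2) ≤ ‖z‖ ^ (N + 1) := by
      calc s ^ N * (‖F z‖ / 2)
          ≤ (∏ i ∈ Finset.range N, ω i) * ‖∑ j ∈ Finset.range (N + 1), c j * z ^ j‖ :=
            mul_le_mul hsN.le hPN (by positivity) hβpos.le
        _ = ‖z‖ ^ (N + 1) * ‖e.repr (f z) N‖ := En.symm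
        _ ≤ ‖z‖ ^ (N + 1) * 1 := mul_le_mul_of_nonneg_left hgN.le hzN1.le
        _ = ‖z‖ ^ (N + 1) := mul_one _
    have h2 : ‖z‖ ^ (N + 1) < s ^ N * (‖F z‖ / 2) := by
      rw [div_pow] at hbigN
      rw [div_lt_div_iff₀ hFzpos (pow_pos hz0 N)] at hbigN
      have : ‖z‖ ^ (N + 1) = ‖z‖ ^ N * ‖z‖ := pow_succ _ _
      nlinarith
    linarith

lemma lsws_resolvent (S : H →L[ℂ] H) (e : HilbertBasis ℕ ℂ H) (ω : ℕ → ℝ)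
    (hpos : ∀ n, 0 < ω n) (M : ℝ) (hbd : ∀ n, ω n ≤ M)
    (hS : ∀ n, S (e n) = (ω n : ℂ) • e (n + 1)) (x : H) (μ : ℂ)
    (hgap : ENNReal.ofReal (atTop.limsup fun n : ℕ => (∏ i ∈ Finset.range n, ω i) ^ ((n : ℝ)⁻¹))
      < atTop.liminf fun n : ℕ =>
        (ENNReal.ofReal (∏ i ∈ Finset.range n, ω i) / ENNReal.ofReal ‖e.repr x n‖) ^ ((n : ℝ)⁻¹))
    (hμ : (atTop.limsup fun n : ℕ => (∏ i ∈ Finset.range n, ω i) ^ ((n : ℝ)⁻¹)) < ‖μ‖) :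
    μ ∈ localResolventSet S x := by
  classical
  set r₃ : ℝ := atTop.limsup fun n : ℕ => (∏ i ∈ Finset.range n, ω i) ^ ((n : ℝ)⁻¹) with hr₃def
  set Rω : ℝ≥0∞ := atTop.liminf fun n : ℕ =>
    (ENNReal.ofReal (∏ i ∈ Finset.range n, ω i) / ENNReal.ofReal ‖e.repr x n‖) ^ ((n : ℝ)⁻¹)
    with hRωdef
  have hr₃0 : 0 ≤ r₃ := lsws_r3_nonneg ω hpos M hbd
  have hμpos : 0 < ‖μ‖ := lt_of_le_of_lt hr₃0 hμ
  -- choose r' with r₃ < r', ofReal r' < Rω, r' < ‖μ‖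
  obtain ⟨r', hr₃r', hr'R, hr'μ⟩ : ∃ r', r₃ < r' ∧ ENNReal.ofReal r' < Rω ∧ r' < ‖μ‖ := by
    have h1 : ENNReal.ofReal r₃ < ENNReal.ofReal ‖μ‖ :=
      (ENNReal.ofReal_lt_ofReal_iff hμpos).mpr hμ
    obtain ⟨ξ, hξ1, hξ2⟩ := exists_between (lt_min hgap h1)
    have hξtop : ξ ≠ ⊤ :=
      ne_top_of_lt (lt_of_lt_of_le hξ2 (le_trans (min_le_right _ _) le_top))
    have hofr : ENNReal.ofReal ξ.toReal = ξ := ENNReal.ofReal_toReal hξtop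
    refine ⟨ξ.toReal, ?_, ?_, ?_⟩
    · rw [← hofr] at hξ1
      exact (ENNReal.ofReal_lt_ofReal_iff'.mp hξ1).1
    · rw [hofr]
      exact lt_of_lt_of_le hξ2 (min_le_left _ _)
    · have h2 : ξ < ENNReal.ofReal ‖μ‖ := lt_of_lt_of_le hξ2 (min_le_right _ _)
      rw [← hofr] at h2
      exact (ENNReal.ofReal_lt_ofReal_iff'.mp h2).1
  have hr'pos : 0 < r' := lt_of_le_of_lt hr₃0 hr₃r'
  obtain ⟨s, hr₃s, hsr'⟩ : ∃ s, r₃ < s ∧ s < r' := ⟨(r₃ + r') / 2, by constructor <;> linarith⟩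
  obtain ⟨s', hr's', hs'μ⟩ : ∃ s', r' < s' ∧ s' < ‖μ‖ :=
    ⟨(r' + ‖μ‖) / 2, by constructor <;> linarith⟩
  set t' : ℝ := ‖μ‖ + 1 with ht'def
  have hs'pos : 0 < s' := lt_trans hr'pos hr's'
  -- the open annulus
  set U : Set ℂ := norm ⁻¹' Set.Ioo s' t' with hUdef
  have hUo : IsOpen U := isOpen_Ioo.preimage continuous_norm
  have hzU : ∀ z ∈ U, s' < ‖z‖ ∧ ‖z‖ < t' := by
    intro z hz
    have : ‖z‖ ∈ Set.Ioo s' t' := hz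
    exact ⟨this.1, this.2⟩
  have hμU : μ ∈ U := by
    have : ‖μ‖ ∈ Set.Ioo s' t' := ⟨hs'μ, by rw [ht'def]; linarith⟩
    exact this
  have hzne : ∀ z ∈ U, z ≠ 0 := fun z hz => by
    have := (hzU z hz).1
    intro h
    rw [h, norm_zero] at this
    linarith
  -- coefficients
  set c : ℕ → ℂ := fun n => e.repr x n / lswsB ω n with hcdef
  obtain ⟨j₀, hj₀⟩ := eventually_atTop.mp (lsws_coeff_bound e ω hpos x r' hr'pos hr'R)
  set A : ℝ := ∑ j ∈ Finset.range j₀, ‖c j‖ * t' ^ j with hAdef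
  have ht'1 : (1:ℝ) ≤ t' := by rw [ht'def]; linarith
  have hA0 : 0 ≤ A := Finset.sum_nonneg fun j _ => by positivity
  -- the resolvent coefficients
  set b : ℕ → ℂ → ℂ := fun N z =>
    -(lswsB ω N) * (∑ j ∈ Finset.range (N + 1), c j * z ^ j) / z ^ (N + 1) with hbdef
  set βr : ℕ → ℝ := fun N => ∏ i ∈ Finset.range N, ω i with hβrdef
  have hβrpos : ∀ N, 0 < βr N := fun N => Finset.prod_pos fun i _ => hpos i
  set h : ℕ → ℝ := fun N => βr N * A / s' ^ (N + 1) + βr N * ((N : ℝ) + 1) / (r' ^ N * s')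
    with hhdef
  have hh0 : ∀ N, 0 ≤ h N := fun N =>
    add_nonneg
      (div_nonneg (mul_nonneg (hβrpos N).le hA0) (pow_nonneg hs'pos.le _))
      (div_nonneg (mul_nonneg (hβrpos N).le (by positivity))
        (mul_nonneg (pow_nonneg hr'pos.le _) hs'pos.le))
  -- the sum bound
  have hsumb : ∀ N, ∀ z ∈ U, ‖∑ j ∈ Finset.range (N + 1), c j * z ^ j‖
      ≤ A + ((N : ℝ) + 1) * (‖z‖ / r') ^ N := by
    intro N z hz
    obtain ⟨hzs', hzt'⟩ := hzU z hz
    have hz0 : 0 < ‖z‖ := lt_trans hs'pos hzs'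
    have hq1 : 1 < ‖z‖ / r' := by rw [lt_div_iff₀ hr'pos]; nlinarith
    calc ‖∑ j ∈ Finset.range (N + 1), c j * z ^ j‖
        ≤ ∑ j ∈ Finset.range (N + 1), ‖c j * z ^ j‖ := norm_sum_le _ _
      _ ≤ ∑ j ∈ Finset.range (N + 1),
            ((if j < j₀ then ‖c j‖ * t' ^ j else 0) + (‖z‖ / r') ^ j) := by
          refine Finset.sum_le_sum fun j hj => ?_
          rw [norm_mul, norm_pow]
          by_cases hjj : j < j₀
          · rw [if_pos hjj]
            have h1 : ‖z‖ ^ j ≤ t' ^ j := pow_le_pow_left₀ (norm_nonneg z) hzt'.le j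
            have h2 : (0:ℝ) ≤ (‖z‖ / r') ^ j := by positivity
            nlinarith [norm_nonneg (c j)]
          · rw [if_neg hjj]
            push_neg at hjj
            have h1 := hj₀ j hjj
            have h2 : ‖c j‖ * ‖z‖ ^ j = (‖c j‖ * r' ^ j) * (‖z‖ / r') ^ j := by
              rw [div_pow]
              field_simp
            rw [h2, zero_add]
            have h3 : (0:ℝ) ≤ (‖z‖ / r') ^ j := by positivity
            nlinarith
      _ = (∑ j ∈ Finset.range (N + 1), if j < j₀ then ‖c j‖ * t' ^ j else 0)
          + ∑ j ∈ Finset.range (N + 1), (‖z‖ / r') ^ j := Finset.sum_add_distrib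
      _ ≤ A + (N + 1) * (‖z‖ / r') ^ N := by
          gcongr
          · -- sum of cut-off terms bounded by A
            rw [← Finset.sum_filter]
            refine Finset.sum_le_sum_of_subset_of_nonneg ?_ (fun j _ _ => by positivity)
            intro j hj
            rw [Finset.mem_filter] at hj
            exact Finset.mem_range.mpr hj.2
          · -- geometric sum bounded by (N+1) * top term
            have := Finset.sum_le_card_nsmul (Finset.range (N + 1))
              (fun j => (‖z‖ / r') ^ j) ((‖z‖ / r') ^ N) (fun j hj => by
                exact pow_le_pow_right₀ hq1.le (by
                  have := Finset.mem_range.mp hj; omega))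
            rw [Finset.card_range, nsmul_eq_mul] at this
            push_cast at this ⊢
            linarith
  -- the norm bound on b
  have hbnorm : ∀ N, ∀ z ∈ U, ‖b N z‖ ≤ h N := by
    intro N z hz
    obtain ⟨hzs', hzt'⟩ := hzU z hz
    have hz0 : 0 < ‖z‖ := lt_trans hs'pos hzs'
    have hbn : ‖b N z‖ = βr N * ‖∑ j ∈ Finset.range (N + 1), c j * z ^ j‖ / ‖z‖ ^ (N + 1) := by
      rw [hbdef]
      simp only []
      rw [norm_div, norm_mul, norm_neg, norm_pow, lswsB_norm ω hpos]
    rw [hbn]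
    calc βr N * ‖∑ j ∈ Finset.range (N + 1), c j * z ^ j‖ / ‖z‖ ^ (N + 1)
        ≤ βr N * (A + ((N : ℝ) + 1) * (‖z‖ / r') ^ N) / ‖z‖ ^ (N + 1) := by
          gcongr
          · exact (hβrpos N).le
          · exact hsumb N z hz
      _ = βr N * A / ‖z‖ ^ (N + 1) + βr N * (N + 1) / (r' ^ N * ‖z‖) := by
          have q1 : (‖z‖ / r') ^ N / ‖z‖ ^ (N + 1) = 1 / (r' ^ N * ‖z‖) := by
            rw [div_pow, pow_succ, div_div, div_eq_div_iff (by positivity) (by positivity)]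
            ring
          rw [mul_add, add_div, ← mul_assoc, mul_div_assoc (βr N * ((N : ℝ) + 1)), q1,
            mul_one_div]
      _ ≤ h N := by
          simp only [hhdef]
          have hzs'le : s' ≤ ‖z‖ := hzs'.le
          have k1 : βr N * A / ‖z‖ ^ (N + 1) ≤ βr N * A / s' ^ (N + 1) := by
            rw [div_eq_mul_one_div, div_eq_mul_one_div (βr N * A)]
            refine mul_le_mul_of_nonneg_left ?_ (mul_nonneg (hβrpos N).le hA0)
            exact one_div_le_one_div_of_le (pow_pos hs'pos _)
              (pow_le_pow_left₀ hs'pos.le hzs'le _)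
          have k2 : βr N * ((N : ℝ) + 1) / (r' ^ N * ‖z‖)
              ≤ βr N * ((N : ℝ) + 1) / (r' ^ N * s') := by
            rw [div_eq_mul_one_div, div_eq_mul_one_div (βr N * ((N : ℝ) + 1))]
            refine mul_le_mul_of_nonneg_left ?_ (mul_nonneg (hβrpos N).le (by positivity))
            exact one_div_le_one_div_of_le (mul_pos (pow_pos hr'pos N) hs'pos)
              (mul_le_mul_of_nonneg_left hzs'le (pow_nonneg hr'pos.le N))
          exact add_le_add k1 k2
  -- summability of the bound
  have hs0 : 0 ≤ s := le_trans hr₃0 hr₃s.le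
  have hsum_h : Summable h := by
    have hβev : ∀ᶠ N in atTop, (∏ i ∈ Finset.range N, ω i) ≤ s ^ N :=
      lsws_beta_upper ω hpos M hbd s (by rw [← hr₃def]; exact hr₃s)
    have g1 : Summable (fun N : ℕ => (s / s') ^ N) :=
      summable_geometric_of_lt_one (by positivity)
        (by rw [div_lt_one hs'pos]; linarith)
    have g3 : Summable (fun N : ℕ => (s / r') ^ N) :=
      summable_geometric_of_lt_one (by positivity)
        (by rw [div_lt_one hr'pos]; linarith)
    have g2 : Summable (fun N : ℕ => (N : ℝ) * (s / r') ^ N) := by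
      have := summable_pow_mul_geometric_of_norm_lt_one 1 (r := s / r')
        (by rw [Real.norm_eq_abs, abs_of_nonneg (by positivity), div_lt_one hr'pos]; linarith)
      simpa [pow_one] using this
    have g4 : Summable (fun N : ℕ => ((N : ℝ) + 1) * (s / r') ^ N * (1 / s')) := by
      refine Summable.mul_right _ ?_
      have := g2.add g3
      refine this.congr fun N => ?_
      ring
    have hgsum : Summable (fun N : ℕ => (A / s') * (s / s') ^ N
        + ((N : ℝ) + 1) * (s / r') ^ N * (1 / s')) := (g1.mul_left _).add g4
    refine hgsum.of_norm_bounded_eventually ?_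
    rw [Nat.cofinite_eq_atTop]
    filter_upwards [hβev] with N hβN
    rw [Real.norm_eq_abs, abs_of_nonneg (hh0 N)]
    simp only [hhdef]
    have hsN : βr N ≤ s ^ N := hβN
    have e1 : s ^ N * A / s' ^ (N + 1) = (A / s') * (s / s') ^ N := by
      rw [div_pow, pow_succ, div_mul_div_comm, div_eq_div_iff (by positivity) (by positivity)]
      ring
    have e2 : s ^ N * ((N : ℝ) + 1) / (r' ^ N * s') = ((N : ℝ) + 1) * (s / r') ^ N * (1 / s') := by
      rw [div_pow, mul_one_div, mul_div_assoc', div_div,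
        div_eq_div_iff (by positivity) (by positivity)]
      ring
    have t1 : βr N * A / s' ^ (N + 1) ≤ s ^ N * A / s' ^ (N + 1) :=
      div_le_div_of_nonneg_right (mul_le_mul_of_nonneg_right hsN hA0) (pow_pos hs'pos _).le
    have t2 : βr N * ((N : ℝ) + 1) / (r' ^ N * s') ≤ s ^ N * ((N : ℝ) + 1) / (r' ^ N * s') :=
      div_le_div_of_nonneg_right (mul_le_mul_of_nonneg_right hsN (by positivity))
        (mul_pos (pow_pos hr'pos N) hs'pos).le
    calc βr N * A / s' ^ (N + 1) + βr N * (↑N + 1) / (r' ^ N * s')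
        ≤ s ^ N * A / s' ^ (N + 1) + s ^ N * ((N : ℝ) + 1) / (r' ^ N * s') := add_le_add t1 t2
      _ = (A / s') * (s / s') ^ N + ((N : ℝ) + 1) * (s / r') ^ N * (1 / s') := by rw [e1, e2]
  -- the candidate local resolvent function
  set fres : ℂ → H := fun z => ∑' N, b N z • e N with hfresdef
  have hEnorm : ∀ N, ‖e N‖ = 1 := fun N => e.orthonormal.1 N
  have hfbound : ∀ N : ℕ, ∀ z ∈ U, ‖b N z • e N‖ ≤ h N := by
    intro N z hz
    rw [norm_smul, hEnorm, mul_one]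
    exact hbnorm N z hz
  -- analyticity
  have hbdiff : ∀ N : ℕ, DifferentiableOn ℂ (fun z => b N z • e N) U := by
    intro N
    refine DifferentiableOn.smul_const ?_ (e N)
    simp only [hbdef]
    refine DifferentiableOn.div ?_ (differentiable_pow _).differentiableOn ?_
    · refine Differentiable.differentiableOn ?_
      refine (differentiable_const _).mul ?_
      refine Differentiable.fun_sum fun j _ => ?_
      exact (differentiable_const _).mul (differentiable_pow _)
    · intro z hz
      exact pow_ne_zero _ (hzne z hz)
  have hfan : AnalyticOnNhd ℂ fres U := by
    refine DifferentiableOn.analyticOnNhd ?_ hUo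
    simp only [hfresdef]
    exact Complex.differentiableOn_tsum_of_summable_norm hsum_h hbdiff hUo
      (fun N w hw => hfbound N w hw)
  -- the resolvent identity
  refine ⟨U, hUo, hμU, fres, hfan, ?_⟩
  intro z hz
  have hz0 : z ≠ 0 := hzne z hz
  have hsb : Summable (fun N => b N z • e N) :=
    Summable.of_norm_bounded hsum_h (fun N => hfbound N z hz)
  have hHasSum : HasSum (fun N => b N z • e N) (fres z) := hsb.hasSum
  have h2 := hHasSum.mapL (S - z • (1 : H →L[ℂ] H))
  have h3 : HasSum (fun N => (b N z * ω N) • e (N + 1) - (z * b N z) • e N)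
      ((S - z • (1 : H →L[ℂ] H)) (fres z)) := by
    refine h2.congr_fun fun N => ?_
    rw [ContinuousLinearMap.sub_apply, ContinuousLinearMap.smul_apply,
      ContinuousLinearMap.one_apply, map_smul, hS, smul_smul, smul_smul]
  -- the recursion
  have hrec : ∀ N : ℕ, b N z * ω N = e.repr x (N + 1) + z * b (N + 1) z := by
    intro N
    have hzp1 : z ^ (N + 1) ≠ 0 := pow_ne_zero _ hz0
    have hzp2 : z ^ (N + 2) ≠ 0 := pow_ne_zero _ hz0
    have hBN : lswsB ω N ≠ 0 := lswsB_ne_zero ω hpos N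
    have hBN1 : lswsB ω (N + 1) ≠ 0 := lswsB_ne_zero ω hpos (N + 1)
    have hwN : (ω N : ℂ) ≠ 0 := by exact_mod_cast (hpos N).ne'
    simp only [hbdef, hcdef]
    rw [Finset.sum_range_succ (f := fun j => e.repr x j / lswsB ω j * z ^ j) (n := N + 1),
      lswsB_succ]
    rw [lswsB_succ] at hBN1
    field_simp
    ring
  -- telescoping partial sums
  set w : ℕ → H := fun j => e.repr x j • e j with hwdef
  set v : ℕ → H := fun j => (z * b j z) • e j with hvdef
  have hterm : ∀ N : ℕ, (b N z * ω N) • e (N + 1) - (z * b N z) • e N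
      = w (N + 1) + (v (N + 1) - v N) := by
    intro N
    rw [hrec N]
    simp only [hwdef, hvdef, add_smul]
    abel
  have hb0 : z * b 0 z = -(e.repr x 0) := by
    simp only [hbdef, hcdef]
    rw [Finset.sum_range_one]
    rw [lswsB_zero]
    field_simp
    ring
  have hpart : ∀ K : ℕ, ∑ N ∈ Finset.range K, ((b N z * ω N) • e (N + 1) - (z * b N z) • e N)
      = (∑ j ∈ Finset.range (K + 1), w j) + v K := by
    intro K
    calc ∑ N ∈ Finset.range K, ((b N z * ω N) • e (N + 1) - (z * b N z) • e N)
        = ∑ N ∈ Finset.range K, (w (N + 1) + (v (N + 1) - v N)) :=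
          Finset.sum_congr rfl fun N _ => hterm N
      _ = (∑ N ∈ Finset.range K, w (N + 1)) + ∑ N ∈ Finset.range K, (v (N + 1) - v N) :=
          Finset.sum_add_distrib
      _ = (∑ N ∈ Finset.range K, w (N + 1)) + (v K - v 0) := by rw [Finset.sum_range_sub]
      _ = (∑ j ∈ Finset.range (K + 1), w j) + v K := by
          have hv0 : v 0 = -(w 0) := by
            simp only [hvdef, hwdef]
            rw [hb0, neg_smul]
          rw [hv0, Finset.sum_range_succ' w K]
          abel
  -- limits
  have htendA : Tendsto
      (fun K => ∑ N ∈ Finset.range K, ((b N z * ω N) • e (N + 1) - (z * b N z) • e N))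
      atTop (𝓝 ((S - z • (1 : H →L[ℂ] H)) (fres z))) := h3.tendsto_sum_nat
  have htendW : Tendsto (fun K => ∑ j ∈ Finset.range (K + 1), w j) atTop (𝓝 x) :=
    ((e.hasSum_repr x).tendsto_sum_nat).comp (tendsto_add_atTop_nat 1)
  have hvtend : Tendsto v atTop (𝓝 0) := by
    rw [tendsto_zero_iff_norm_tendsto_zero]
    refine squeeze_zero (g := fun K => ‖z‖ * h K) (fun K => norm_nonneg _) (fun K => ?_) ?_
    · show ‖v K‖ ≤ ‖z‖ * h K
      simp only [hvdef]
      rw [norm_smul, hEnorm, mul_one, norm_mul]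
      exact mul_le_mul_of_nonneg_left (hbnorm K z hz) (norm_nonneg z)
    · have := hsum_h.tendsto_atTop_zero.const_mul ‖z‖
      simpa using this
  have htendB : Tendsto
      (fun K => (∑ j ∈ Finset.range (K + 1), w j) + v K) atTop (𝓝 (x + 0)) :=
    htendW.add hvtend
  rw [add_zero] at htendB
  exact tendsto_nhds_unique (htendA.congr hpart) htendB

end LSWSAux

variable {H : Type*} [NormedAddCommGroup H] [InnerProductSpace ℂ H] [CompleteSpace H]

/-- Description of the local spectra of a unilateral weighted shift `S`.  With
`β n = ω 0 ⋯ ω (n-1)`, `r₃(S) = limsup (β n)^(1/n)` and, for `x = Σ a n • e n ≠ 0`,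
`R_ω(x) = liminf |β n / a n|^(1/n)` (valued in `ℝ≥0∞`, with `β n / 0 = ∞`):
if `r₃(S) < R_ω(x)` then `σ_S(x)` is the closed disc of radius `r₃(S)`;
if `r₃(S) ≥ R_ω(x)` then the closed disc of radius `R_ω(x)` is contained in `σ_S(x)`. -/
theorem localSpectrum_weighted_shift (S : H →L[ℂ] H)
    (e : HilbertBasis ℕ ℂ H) (ω : ℕ → ℝ) (hpos : ∀ n, 0 < ω n)
    (hbd : ∃ M : ℝ, ∀ n, ω n ≤ M)
    (hS : ∀ n, S (e n) = (ω n : ℂ) • e (n + 1))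
    (x : H) (hx : x ≠ 0)
    (r₃ : ℝ) (hr₃ : r₃ = atTop.limsup fun n : ℕ => (∏ i ∈ Finset.range n, ω i) ^ ((n : ℝ)⁻¹))
    (Rω : ℝ≥0∞)
    (hRω : Rω = atTop.liminf fun n : ℕ =>
      (ENNReal.ofReal (∏ i ∈ Finset.range n, ω i) / ENNReal.ofReal ‖e.repr x n‖) ^ ((n : ℝ)⁻¹)) :
    (ENNReal.ofReal r₃ < Rω → localSpectrum S x = Metric.closedBall (0 : ℂ) r₃) ∧
    (Rω ≤ ENNReal.ofReal r₃ →
      ∀ μ : ℂ, ENNReal.ofReal ‖μ‖ ≤ Rω → μ ∈ localSpectrum S x) := by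
  obtain ⟨M, hbd⟩ := hbd
  subst hr₃
  subst hRω
  have hr₃0 := lsws_r3_nonneg ω hpos M hbd
  constructor
  · intro hlt
    ext μ
    rw [Metric.mem_closedBall, dist_zero_right]
    constructor
    · intro hμ
      by_contra h'
      push_neg at h'
      exact hμ (lsws_resolvent S e ω hpos M hbd hS x μ hlt h')
    · intro hμle
      intro hres
      by_cases hμ0 : μ = 0
      · subst hμ0
        exact hx (lsws_zero_resolvent S e ω hpos hS x hres)
      · refine lsws_mem_spectrum S e ω hpos hS x hx μ hμ0 hμle ?_ hres
        exact le_trans (ENNReal.ofReal_le_ofReal hμle) hlt.le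
  · intro hle μ hμR
    intro hres
    by_cases hμ0 : μ = 0
    · subst hμ0
      exact hx (lsws_zero_resolvent S e ω hpos hS x hres)
    · have hμ3 : ‖μ‖ ≤ atTop.limsup fun n : ℕ => (∏ i ∈ Finset.range n, ω i) ^ ((n : ℝ)⁻¹) := by
        have h1 := le_trans hμR hle
        exact (ENNReal.ofReal_le_ofReal_iff hr₃0).mp h1
      exact lsws_mem_spectrum S e ω hpos hS x hx μ hμ0 hμ3 hμR hres
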